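/- The pure virtual twin group PVT_n has the presentation with generators λ_{i,j} for 1 ≤ i < j ≤ n and defining relations λ_{i,j}λ_{k,l} = λ_{k,l}λ_{i,j} whenever i, j, k, l are four distinct integers. In particular, PVT_n is a right-angled Artin group. -/

import Mathlib

namespace VTG

open scoped commutatorElement

abbrev Gen (n : ℕ) := Fin (n-1) ⊕ Fin (n-1)

/-- The free-group letter corresponding to the generator `s_i`. -/
def fs {n : ℕ} (i : Fin (n-1)) : FreeGroup (Gen n) := FreeGroup.of (Sum.inl i)

/-- The free-group letter corresponding to the generator `ρ_i`. -/
def fr {n : ℕ} (i : Fin (n-1)) : FreeGroup (Gen n) := FreeGroup.of (Sum.inr i)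

/-- The defining relations of the virtual twin group `VT_n`. -/
def vtRels (n : ℕ) : Set (FreeGroup (Gen n)) :=
  { w | (∃ i : Fin (n-1), w = fs i * fs i) ∨
        (∃ i j : Fin (n-1), (i : ℕ) + 2 ≤ (j : ℕ) ∧ w = ⁅fs i, fs j⁆) ∨
        (∃ i : Fin (n-1), w = fr i * fr i) ∨
        (∃ i j : Fin (n-1), (i : ℕ) + 2 ≤ (j : ℕ) ∧ w = ⁅fr i, fr j⁆) ∨
        (∃ i j : Fin (n-1), (j : ℕ) = (i : ℕ) + 1 ∧
          w = fr i * fr j * fr i * (fr j * fr i * fr j)⁻¹) ∨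
        (∃ i j : Fin (n-1), (i : ℕ) + 2 ≤ (j : ℕ) ∧ (w = ⁅fr i, fs j⁆ ∨ w = ⁅fs i, fr j⁆)) ∨
        (∃ i j : Fin (n-1), (j : ℕ) = (i : ℕ) + 1 ∧
          w = fr i * fr j * fs i * (fs j * fr i * fr j)⁻¹) }

/-- The virtual twin group `VT_n`. -/
abbrev VT (n : ℕ) := PresentedGroup (vtRels n)

/-- The generator `s_{k+1}` (1-based numbering) of `VT_n`. -/
def sg {n : ℕ} (k : ℕ) (h : k < n - 1) : VT n := PresentedGroup.of (Sum.inl ⟨k, h⟩)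

/-- The generator `ρ_{k+1}` (1-based numbering) of `VT_n`. -/
def rg {n : ℕ} (k : ℕ) (h : k < n - 1) : VT n := PresentedGroup.of (Sum.inr ⟨k, h⟩)

/-- The transposition `(i, i+1)` in the symmetric group on `n` letters. -/
def tr {n : ℕ} (i : Fin (n - 1)) : Equiv.Perm (Fin n) :=
  Equiv.swap ⟨i.1, by have := i.2; omega⟩ ⟨i.1 + 1, by have := i.2; omega⟩

lemma swap_commute {α : Type*} [DecidableEq α] {a b c d : α}
    (h1 : a ≠ c) (h2 : a ≠ d) (h3 : b ≠ c) (h4 : b ≠ d) :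
    Commute (Equiv.swap a b) (Equiv.swap c d) := by
  apply Equiv.Perm.Disjoint.commute
  intro x
  by_cases hxa : x = a
  · subst hxa; right; exact Equiv.swap_apply_of_ne_of_ne h1 h2
  · by_cases hxb : x = b
    · subst hxb; right; exact Equiv.swap_apply_of_ne_of_ne h3 h4
    · left; exact Equiv.swap_apply_of_ne_of_ne hxa hxb

lemma tr_commute {n : ℕ} {i j : Fin (n-1)} (h : (i : ℕ) + 2 ≤ (j : ℕ)) :
    Commute (tr (n := n) i) (tr j) := by
  apply swap_commute <;>
    (intro hEq; apply_fun Fin.val at hEq; simp only [] at hEq; omega)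

lemma tr_braid {n : ℕ} {i j : Fin (n-1)} (h : (j : ℕ) = (i : ℕ) + 1) :
    tr (n := n) i * tr j * tr i = tr j * tr i * tr j := by
  have hj2 : (i : ℕ) + 2 ≤ n := by have := j.2; omega
  set a : Fin n := ⟨i.1, by omega⟩ with ha
  set b : Fin n := ⟨i.1 + 1, by omega⟩ with hb
  set c : Fin n := ⟨i.1 + 2, by omega⟩ with hc
  have hab : a ≠ b := by simp [ha, hb, Fin.ext_iff]
  have hbc : b ≠ c := by simp [hb, hc, Fin.ext_iff]
  have hac : a ≠ c := by simp [ha, hc, Fin.ext_iff]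
  have h1 : tr (n := n) i = Equiv.swap a b := rfl
  have h2 : tr (n := n) j = Equiv.swap b c := by
    unfold tr
    congr 1 <;> exact Fin.ext (by simp [hb, hc, h])
  rw [h1, h2]
  have L := Equiv.swap_mul_swap_mul_swap (x := c) (y := b) (z := a)
    (hbc.symm) (hac.symm)
  have R := Equiv.swap_mul_swap_mul_swap (x := a) (y := b) (z := c)
    (hab) (hac)
  calc Equiv.swap a b * Equiv.swap b c * Equiv.swap a b
      = Equiv.swap b a * Equiv.swap c b * Equiv.swap b a := by
        rw [Equiv.swap_comm a b, Equiv.swap_comm b c]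
    _ = Equiv.swap a c := L
    _ = Equiv.swap c a := Equiv.swap_comm a c
    _ = Equiv.swap b c * Equiv.swap a b * Equiv.swap b c := R.symm

lemma tr_sq {n : ℕ} (i : Fin (n-1)) : tr (n := n) i * tr i = 1 := Equiv.swap_mul_self _ _

/-- The canonical projection `π : VT_n → S_n`. -/
def perm (n : ℕ) : VT n →* Equiv.Perm (Fin n) :=
  PresentedGroup.toGroup (f := Sum.elim tr tr) (by
    rintro w (⟨i, rfl⟩ | ⟨i, j, hij, rfl⟩ | ⟨i, rfl⟩ | ⟨i, j, hij, rfl⟩ |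
      ⟨i, j, hij, rfl⟩ | ⟨i, j, hij, (rfl | rfl)⟩ | ⟨i, j, hij, rfl⟩)
    · simp [fs, tr_sq]
    · rw [map_commutatorElement]
      simp only [fs, FreeGroup.lift_apply_of, Sum.elim_inl]
      exact commutatorElement_eq_one_iff_commute.mpr (tr_commute hij)
    · simp [fr, tr_sq]
    · rw [map_commutatorElement]
      simp only [fr, FreeGroup.lift_apply_of, Sum.elim_inr]
      exact commutatorElement_eq_one_iff_commute.mpr (tr_commute hij)
    · have h1 : FreeGroup.lift (Sum.elim tr tr) (fr i * fr j * fr (n := n) i)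
          = tr i * tr j * tr i := by simp [fr]
      have h2 : FreeGroup.lift (Sum.elim tr tr) (fr j * fr i * fr (n := n) j)
          = tr j * tr i * tr j := by simp [fr]
      rw [map_mul, map_inv, h1, h2, tr_braid hij, mul_inv_cancel]
    · rw [map_commutatorElement]
      simp only [fr, fs, FreeGroup.lift_apply_of, Sum.elim_inl, Sum.elim_inr]
      exact commutatorElement_eq_one_iff_commute.mpr (tr_commute hij)
    · rw [map_commutatorElement]
      simp only [fr, fs, FreeGroup.lift_apply_of, Sum.elim_inl, Sum.elim_inr]
      exact commutatorElement_eq_one_iff_commute.mpr (tr_commute hij)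
    · have h1 : FreeGroup.lift (Sum.elim tr tr) (fr i * fr j * fs (n := n) i)
          = tr i * tr j * tr i := by simp [fr, fs]
      have h2 : FreeGroup.lift (Sum.elim tr tr) (fs j * fr i * fr (n := n) j)
          = tr j * tr i * tr j := by simp [fr, fs]
      rw [map_mul, map_inv, h1, h2, tr_braid hij, mul_inv_cancel])


/-- Vertices `λ_{i,j}`, `1 ≤ i < j ≤ n`, indexed by pairs of `Fin n`. -/
abbrev Vtx (n : ℕ) := {p : Fin n × Fin n // p.1 < p.2}

/-- Two vertices `λ_{i,j}` and `λ_{k,l}` have disjoint index sets, i.e. `i,j,k,l` are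
four distinct integers. -/
abbrev DisjV {n : ℕ} (p q : Vtx n) : Prop :=
  p.1.1 ≠ q.1.1 ∧ p.1.1 ≠ q.1.2 ∧ p.1.2 ≠ q.1.1 ∧ p.1.2 ≠ q.1.2

/-- The right-angled Artin relations for `PVT_n`: the generators `λ_{i,j}` and `λ_{k,l}`
commute whenever `i, j, k, l` are four distinct integers. -/
def raagRels (n : ℕ) : Set (FreeGroup (Vtx n)) :=
  { w | ∃ p q : Vtx n, DisjV p q ∧ w = ⁅FreeGroup.of p, FreeGroup.of q⁆ }

/-- The element `λ_{a+1,b+1} = ρ_{b}⋯ρ_{a+2}(s_{a+1}ρ_{a+1})ρ_{a+2}⋯ρ_{b}` of `VT n`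
(paper indices are 1-based; here `a,b` are 0-based strand indices with `a < b < n`). -/
def lamN {n : ℕ} : ℕ → ℕ → VT n
  | a, b =>
    if h : a < b ∧ b < n then
      if hb : b = a + 1 then sg a (by omega) * rg a (by omega)
      else rg (b - 1) (by omega) * lamN a (b - 1) * rg (b - 1) (by omega)
    else 1
  termination_by a b => b
  decreasing_by omega

/-- The generator `λ_{i,j}` of `PVT_n`, as an element of `VT n`. -/
def lam {n : ℕ} (p : Vtx n) : VT n := lamN p.1.1.1 p.1.2.1

/-! ### Part B0: relation lemmas in `VT n` -/

section VTrels
variable {n : ℕ}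

lemma relOne {w : FreeGroup (Gen n)} (h : w ∈ vtRels n) :
    (PresentedGroup.mk (vtRels n) w : VT n) = 1 := by
  exact (QuotientGroup.eq_one_iff _).mpr (Subgroup.subset_normalClosure h)

lemma mk_fs {i : Fin (n-1)} : PresentedGroup.mk (vtRels n) (fs i) = sg i.1 i.2 := rfl
lemma mk_fr {i : Fin (n-1)} : PresentedGroup.mk (vtRels n) (fr i) = rg i.1 i.2 := rfl

lemma sg_sq {k : ℕ} (h : k < n-1) : sg (n := n) k h * sg k h = 1 := by
  have := relOne (n := n) (w := fs ⟨k,h⟩ * fs ⟨k,h⟩) (Or.inl ⟨⟨k,h⟩, rfl⟩)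
  rwa [map_mul, mk_fs] at this

lemma rg_sq {k : ℕ} (h : k < n-1) : rg (n := n) k h * rg k h = 1 := by
  have := relOne (n := n) (w := fr ⟨k,h⟩ * fr ⟨k,h⟩)
    (Or.inr (Or.inr (Or.inl ⟨⟨k,h⟩, rfl⟩)))
  rwa [map_mul, mk_fr] at this

lemma sg_inv {k : ℕ} (h : k < n-1) : (sg (n := n) k h)⁻¹ = sg k h :=
  inv_eq_of_mul_eq_one_right (sg_sq h)

lemma rg_inv {k : ℕ} (h : k < n-1) : (rg (n := n) k h)⁻¹ = rg k h :=
  inv_eq_of_mul_eq_one_right (rg_sq h)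

lemma ss_comm {i j : ℕ} (hi : i < n-1) (hj : j < n-1) (hij : i + 2 ≤ j) :
    Commute (sg (n := n) i hi) (sg j hj) := by
  have := relOne (n := n) (w := ⁅fs ⟨i,hi⟩, fs ⟨j,hj⟩⁆)
    (Or.inr (Or.inl ⟨⟨i,hi⟩, ⟨j,hj⟩, hij, rfl⟩))
  rw [map_commutatorElement, mk_fs, mk_fs] at this
  exact commutatorElement_eq_one_iff_commute.mp this

lemma rr_comm {i j : ℕ} (hi : i < n-1) (hj : j < n-1) (hij : i + 2 ≤ j) :
    Commute (rg (n := n) i hi) (rg j hj) := by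
  have := relOne (n := n) (w := ⁅fr ⟨i,hi⟩, fr ⟨j,hj⟩⁆)
    (Or.inr (Or.inr (Or.inr (Or.inl ⟨⟨i,hi⟩, ⟨j,hj⟩, hij, rfl⟩))))
  rw [map_commutatorElement, mk_fr, mk_fr] at this
  exact commutatorElement_eq_one_iff_commute.mp this

lemma rs_comm {i j : ℕ} (hi : i < n-1) (hj : j < n-1) (hij : i + 2 ≤ j) :
    Commute (rg (n := n) i hi) (sg j hj) := by
  have := relOne (n := n) (w := ⁅fr ⟨i,hi⟩, fs ⟨j,hj⟩⁆)
    (Or.inr (Or.inr (Or.inr (Or.inr (Or.inr (Or.inl ⟨⟨i,hi⟩, ⟨j,hj⟩, hij, Or.inl rfl⟩))))))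
  rw [map_commutatorElement, mk_fr, mk_fs] at this
  exact commutatorElement_eq_one_iff_commute.mp this

lemma sr_comm {i j : ℕ} (hi : i < n-1) (hj : j < n-1) (hij : i + 2 ≤ j) :
    Commute (sg (n := n) i hi) (rg j hj) := by
  have := relOne (n := n) (w := ⁅fs ⟨i,hi⟩, fr ⟨j,hj⟩⁆)
    (Or.inr (Or.inr (Or.inr (Or.inr (Or.inr (Or.inl ⟨⟨i,hi⟩, ⟨j,hj⟩, hij, Or.inr rfl⟩))))))
  rw [map_commutatorElement, mk_fs, mk_fr] at this
  exact commutatorElement_eq_one_iff_commute.mp this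

lemma rg_braid {i : ℕ} (h : i + 1 < n-1) :
    rg (n := n) i (by omega) * rg (i+1) h * rg i (by omega)
      = rg (i+1) h * rg i (by omega) * rg (i+1) h := by
  have := relOne (n := n)
    (w := fr ⟨i, by omega⟩ * fr ⟨i+1,h⟩ * fr ⟨i, by omega⟩
      * (fr ⟨i+1,h⟩ * fr ⟨i, by omega⟩ * fr ⟨i+1,h⟩)⁻¹)
    (Or.inr (Or.inr (Or.inr (Or.inr (Or.inl ⟨⟨i, by omega⟩, ⟨i+1,h⟩, rfl, rfl⟩)))))
  simp only [map_mul, map_inv, mk_fr] at this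
  exact mul_inv_eq_one.mp this

lemma mixed_braid {i : ℕ} (h : i + 1 < n-1) :
    rg (n := n) i (by omega) * rg (i+1) h * sg i (by omega)
      = sg (i+1) h * rg i (by omega) * rg (i+1) h := by
  have := relOne (n := n)
    (w := fr ⟨i, by omega⟩ * fr ⟨i+1,h⟩ * fs ⟨i, by omega⟩
      * (fs ⟨i+1,h⟩ * fr ⟨i, by omega⟩ * fr ⟨i+1,h⟩)⁻¹)
    (Or.inr (Or.inr (Or.inr (Or.inr (Or.inr (Or.inr ⟨⟨i, by omega⟩, ⟨i+1,h⟩, rfl, rfl⟩))))))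
  simp only [map_mul, map_inv, mk_fr, mk_fs] at this
  exact mul_inv_eq_one.mp this

/-- `rg` is proof-irrelevant in the bound. -/
lemma rg_congr {i j : ℕ} (hi : i < n-1) (hj : j < n-1) (hij : i = j) :
    rg (n := n) i hi = rg j hj := by subst hij; rfl

lemma rr_comm' {i j : ℕ} (hi : i < n-1) (hj : j < n-1) (hij : i + 2 ≤ j ∨ j + 2 ≤ i) :
    Commute (rg (n := n) i hi) (rg j hj) := by
  rcases hij with h | h
  · exact rr_comm hi hj h
  · exact (rr_comm hj hi h).symm

end VTrels

/-! ### Part B1: `lamN` lemmas -/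

section LamN
variable {n : ℕ}

lemma lamN_base {a : ℕ} (h : a + 1 < n) :
    lamN (n := n) a (a+1) = sg a (by omega) * rg a (by omega) := by
  rw [lamN]
  simp [h]

lemma lamN_step {a b : ℕ} (hab : a < b) (hb : b + 1 < n) :
    lamN (n := n) a (b+1) = rg b (by omega) * lamN a b * rg b (by omega) := by
  rw [lamN]
  rw [dif_pos ⟨by omega, hb⟩, dif_neg (by omega)]
  simp only [Nat.add_sub_cancel]

end LamN

/-! ### Part B2: conjugation of `lamN` by the `ρ` generators -/

section Conj
variable {n : ℕ}

lemma rs_comm' {i j : ℕ} (hi : i < n-1) (hj : j < n-1) (hij : i + 2 ≤ j ∨ j + 2 ≤ i) :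
    Commute (rg (n := n) i hi) (sg j hj) := by
  rcases hij with h | h
  · exact rs_comm hi hj h
  · exact (sr_comm hj hi h).symm

lemma lamN_junk {a b : ℕ} (h : ¬(a < b ∧ b < n)) : lamN (n := n) a b = 1 := by
  rw [lamN]; simp [h]

/-- Far commutation: `ρ_k` commutes with `λ_{a,b}` when `{k,k+1} ∩ [a,b] = ∅`. -/
lemma lamN_far {k a b : ℕ} (hk : k < n-1) (hab : a < b) (hb : b < n)
    (hfar : k + 1 < a ∨ b < k) : Commute (rg (n := n) k hk) (lamN a b) := by
  induction b using Nat.strong_induction_on with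
  | _ b IH =>
    rcases Nat.eq_or_lt_of_le hab with hbase | hstep
    · rw [← hbase, lamN_base (by omega)]
      exact (rs_comm' hk (by omega) (by omega)).mul_right (rr_comm' hk (by omega) (by omega))
    · obtain ⟨m, rfl⟩ : ∃ m, b = m + 1 := ⟨b - 1, by omega⟩
      rw [lamN_step (by omega) (by omega)]
      have h1 : Commute (rg (n := n) k hk) (rg m (by omega)) :=
        rr_comm' hk (by omega) (by omega)
      have h2 : Commute (rg (n := n) k hk) (lamN a m) :=
        IH m (by omega) (by omega) (by omega) (by omega)
      exact (h1.mul_right h2).mul_right h1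

/-- Case 6: conjugating `λ_{a,k+1}` by `ρ_k` gives `λ_{a,k}`. -/
lemma lamN_conj_k {a k : ℕ} (ha : a < k) (hk : k < n-1) :
    rg (n := n) k hk * lamN a (k+1) * rg k hk = lamN a k := by
  rw [lamN_step ha (by omega), ← mul_assoc, ← mul_assoc, rg_sq, one_mul,
    mul_assoc, rg_sq, mul_one]

/-- An abstract braid-juggling identity used for the middle commutation case. -/
lemma abstract_mid {G : Type*} [Group G] {w x L : G} (hw : w * w = 1) (hx : x * x = 1)
    (hb : w * x * w = x * w * x) (hc : x * L = L * x) :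
    w * (x * (w * L * w) * x) * w = x * (w * L * w) * x := by
  have h6 : x * L * x = L := by rw [hc, mul_assoc, hx, mul_one]
  calc w * (x * (w * L * w) * x) * w = (w * x * w) * L * (w * x * w) := by group
    _ = (x * w * x) * L * (x * w * x) := by rw [hb]
    _ = x * w * (x * L * x) * w * x := by group
    _ = x * w * L * w * x := by rw [h6]
    _ = x * (w * L * w) * x := by group

/-- Middle commutation: `ρ_k` commutes with `λ_{a,b}` when `a < k` and `k+1 < b`. -/
lemma lamN_mid {k a b : ℕ} (hk : k < n-1) (ha : a < k) (hb1 : k + 1 < b) (hbn : b < n) :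
    Commute (rg (n := n) k hk) (lamN a b) := by
  induction b using Nat.strong_induction_on with
  | _ b IH =>
    rcases Nat.eq_or_lt_of_le hb1 with hbase | hstep
    · -- b = k+2
      rw [← hbase]
      have hkey : lamN (n := n) a (k+2)
          = rg (k+1) (by omega) * (rg k hk * lamN a k * rg k hk) * rg (k+1) (by omega) := by
        rw [lamN_step (by omega) (by omega), lamN_step (by omega) (by omega)]
      rw [Commute, SemiconjBy, hkey]
      have hfar : Commute (rg (n := n) (k+1) (by omega)) (lamN a k) :=
        lamN_far (by omega) ha (by omega) (by omega)
      have habs := abstract_mid (rg_sq (n := n) hk) (rg_sq (n := n) (show k+1 < n-1 by omega))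
        (rg_braid (n := n) (show k+1 < n-1 by omega)) hfar.eq
      calc rg (n := n) k hk * (rg (k+1) (by omega) * (rg k hk * lamN a k * rg k hk) * rg (k+1) (by omega))
          = rg k hk * (rg (k+1) (by omega) * (rg k hk * lamN a k * rg k hk) * rg (k+1) (by omega)) * (rg k hk * rg k hk) := by
            rw [rg_sq]; group
        _ = (rg k hk * (rg (k+1) (by omega) * (rg k hk * lamN a k * rg k hk) * rg (k+1) (by omega)) * rg k hk) * rg k hk := by
            group
        _ = (rg (k+1) (by omega) * (rg k hk * lamN a k * rg k hk) * rg (k+1) (by omega)) * rg k hk := by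
            rw [habs]
    · obtain ⟨m, rfl⟩ : ∃ m, b = m + 1 := ⟨b - 1, by omega⟩
      rw [lamN_step (by omega) (by omega)]
      have h1 : Commute (rg (n := n) k hk) (rg m (by omega)) :=
        rr_comm' hk (by omega) (by omega)
      have h2 : Commute (rg (n := n) k hk) (lamN a m) := IH m (by omega) (by omega) (by omega)
      exact (h1.mul_right h2).mul_right h1

/-- Case 3: conjugating `λ_{a,b}` by `ρ_a` gives `λ_{a+1,b}` (for `a+2 ≤ b`). -/
lemma lamN_conj_a {a b : ℕ} (hab : a + 2 ≤ b) (hb : b < n) (ha : a < n-1) :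
    rg (n := n) a ha * lamN a b * rg a ha = lamN (a+1) b := by
  induction b using Nat.strong_induction_on with
  | _ b IH =>
    rcases Nat.eq_or_lt_of_le hab with hbase | hstep
    · -- b = a+2
      have ha1 : a + 1 < n - 1 := by omega
      rw [← hbase, lamN_step (by omega) (by omega), lamN_base (by omega), lamN_base (by omega)]
      have hmb := mixed_braid (n := n) ha1
      have hbr := rg_braid (n := n) ha1
      calc rg (n := n) a ha * (rg (a+1) ha1 * (sg a (by omega) * rg a (by omega)) * rg (a+1) ha1) * rg a ha
          = (rg a ha * rg (a+1) ha1 * sg a (by omega)) * (rg a ha * rg (a+1) ha1 * rg a ha) := by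
            rw [rg_congr (n := n) (by omega) ha rfl]; group
        _ = (sg (a+1) ha1 * rg a (by omega) * rg (a+1) ha1) * (rg (a+1) ha1 * rg a (by omega) * rg (a+1) ha1) := by
            rw [hmb, hbr]
        _ = sg (a+1) ha1 * rg a (by omega) * (rg (a+1) ha1 * rg (a+1) ha1) * rg a (by omega) * rg (a+1) ha1 := by
            group
        _ = sg (a+1) ha1 * (rg a (by omega) * rg a (by omega)) * rg (a+1) ha1 := by
            rw [rg_sq]; group
        _ = sg (a+1) ha1 * rg (a+1) ha1 := by rw [rg_sq]; group
    · obtain ⟨m, rfl⟩ : ∃ m, b = m + 1 := ⟨b - 1, by omega⟩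
      rw [lamN_step (by omega) (by omega), lamN_step (by omega) (by omega)]
      have hfar : Commute (rg (n := n) a ha) (rg m (by omega)) :=
        rr_comm' ha (by omega) (by omega)
      rw [← IH m (by omega) (by omega) (by omega)]
      calc rg (n := n) a ha * (rg m (by omega) * lamN a m * rg m (by omega)) * rg a ha
          = (rg a ha * rg m (by omega)) * lamN a m * (rg m (by omega) * rg a ha) := by group
        _ = (rg m (by omega) * rg a ha) * lamN a m * (rg a ha * rg m (by omega)) := by
            rw [hfar.eq]
        _ = rg m (by omega) * (rg a ha * lamN a m * rg a ha) * rg m (by omega) := by group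

/-- Abstract identity for case 4. -/
lemma abstract_a1 {G : Type*} [Group G] {r r' t t' : G} (hr : r * r = 1) (hr' : r' * r' = 1)
    (hbr : r * r' * r = r' * r * r') (hmb : r * r' * t = t' * (r * r')) :
    r * (t' * r') * r = r' * (t * r) * r' := by
  have hunit : r * r' * (r' * r) = 1 := by
    calc r * r' * (r' * r) = r * (r' * r') * r := by group
      _ = r * r := by rw [hr']; group
      _ = 1 := hr
  have ht' : t' = r * r' * t * (r' * r) := by
    calc t' = t' * (r * r' * (r' * r)) := by rw [hunit, mul_one]
      _ = (t' * (r * r')) * (r' * r) := by group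
      _ = (r * r' * t) * (r' * r) := by rw [hmb]
      _ = r * r' * t * (r' * r) := by group
  calc r * (t' * r') * r = r * (r * r' * t * (r' * r)) * r' * r := by rw [← ht']; group
    _ = (r * r) * (r' * t * (r' * r * r') * r) := by group
    _ = r' * t * (r' * r * r') * r := by rw [hr, one_mul]
    _ = r' * t * (r * r' * r) * r := by rw [← hbr]
    _ = r' * (t * r) * r' * (r * r) := by group
    _ = r' * (t * r) * r' := by rw [hr, mul_one]

/-- Case 4: conjugating `λ_{k+1,b}` by `ρ_k` gives `λ_{k,b}`. -/
lemma lamN_conj_a1 {k b : ℕ} (hkb : k + 1 < b) (hb : b < n) (hk : k < n-1) :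
    rg (n := n) k hk * lamN (k+1) b * rg k hk = lamN k b := by
  induction b using Nat.strong_induction_on with
  | _ b IH =>
    rcases Nat.eq_or_lt_of_le hkb with hbase | hstep
    · -- b = k+2
      have hk1 : k + 1 < n - 1 := by omega
      rw [← hbase, lamN_base (by omega), lamN_step (by omega) (by omega), lamN_base (by omega)]
      have hmb' : rg (n := n) k hk * rg (k+1) hk1 * sg k (by omega)
          = sg (k+1) hk1 * (rg k hk * rg (k+1) hk1) := by
        rw [mixed_braid (n := n) hk1]; group
      exact abstract_a1 (rg_sq hk) (rg_sq hk1) (rg_braid (n := n) hk1) hmb'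
    · obtain ⟨m, rfl⟩ : ∃ m, b = m + 1 := ⟨b - 1, by omega⟩
      rw [lamN_step (by omega) (by omega), lamN_step (by omega) (by omega)]
      have hfar : Commute (rg (n := n) k hk) (rg m (by omega)) :=
        rr_comm' hk (by omega) (by omega)
      rw [← IH m (by omega) (by omega) (by omega)]
      calc rg (n := n) k hk * (rg m (by omega) * lamN (k+1) m * rg m (by omega)) * rg k hk
          = (rg k hk * rg m (by omega)) * lamN (k+1) m * (rg m (by omega) * rg k hk) := by group
        _ = (rg m (by omega) * rg k hk) * lamN (k+1) m * (rg k hk * rg m (by omega)) := by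
            rw [hfar.eq]
        _ = rg m (by omega) * (rg k hk * lamN (k+1) m * rg k hk) * rg m (by omega) := by group
/-- Case 2: conjugating `λ_{a,a+1}` by `ρ_a` inverts it. -/
lemma lamN_conj_inv {a : ℕ} (ha : a < n-1) :
    rg (n := n) a ha * lamN a (a+1) * rg a ha = (lamN a (a+1))⁻¹ := by
  rw [lamN_base (by omega), mul_inv_rev, sg_inv, rg_inv]
  calc rg (n := n) a ha * (sg a (by omega) * rg a (by omega)) * rg a ha
      = rg a ha * sg a (by omega) * (rg a ha * rg a ha) := by group
    _ = rg a (by omega) * sg a (by omega) := by rw [rg_sq]; group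

end Conj

/-! ### Part B3: the symbols `VL a b` and conjugation by generators -/

section VLdef
variable {n : ℕ}

/-- `λ_{a,b}` for arbitrary pairs, with the convention `λ_{b,a} = λ_{a,b}⁻¹`. -/
def VL (a b : Fin n) : VT n :=
  if h : a.1 < b.1 then lamN a.1 b.1 else (lamN b.1 a.1)⁻¹

lemma VL_of_lt {a b : Fin n} (h : a.1 < b.1) : VL a b = lamN a.1 b.1 := dif_pos h

lemma VL_of_ge {a b : Fin n} (h : ¬ a.1 < b.1) : VL a b = (lamN b.1 a.1)⁻¹ := dif_neg h

lemma VL_refl (a : Fin n) : VL a a = 1 := by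
  rw [VL_of_ge (lt_irrefl _), lamN_junk (by omega), inv_one]

lemma VL_inv (a b : Fin n) : (VL a b)⁻¹ = VL b a := by
  rcases lt_trichotomy a.1 b.1 with h | h | h
  · rw [VL_of_lt h, VL_of_ge (by omega)]
  · rw [VL_of_ge (by omega), VL_of_ge (by omega), h, lamN_junk (by omega)]
    simp
  · rw [VL_of_ge (by omega), VL_of_lt h, inv_inv]

lemma lam_eq_VL (p : Vtx n) : lam p = VL p.1.1 p.1.2 := (VL_of_lt p.2).symm

lemma tr_val (k : Fin (n-1)) (x : Fin n) :
    ((tr k x : Fin n) : ℕ)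
      = if x.1 = k.1 then k.1+1 else if x.1 = k.1+1 then k.1 else x.1 := by
  simp only [tr, Equiv.swap_apply_def]
  split_ifs <;> simp_all [Fin.ext_iff]

lemma tr_fix {k : Fin (n-1)} {x : Fin n} (h1 : x.1 ≠ k.1) (h2 : x.1 ≠ k.1 + 1) :
    tr k x = x := by
  apply Fin.ext; rw [tr_val]; simp [h1, h2]

/-- The master conjugation formula, `a < b` case. -/
lemma conj_base_lt (k : Fin (n-1)) (a b : Fin n) (hab : a.1 < b.1) :
    rg k.1 k.2 * VL a b * rg k.1 k.2 = VL (tr k a) (tr k b) := by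
  have hb : b.1 < n := b.2
  have hk : k.1 < n - 1 := k.2
  rw [VL_of_lt hab]
  by_cases hc1 : k.1 + 1 < a.1 ∨ b.1 < k.1
  · -- far case
    rw [tr_fix (by omega) (by omega), tr_fix (by omega) (by omega), VL_of_lt hab]
    have hf := (lamN_far k.2 hab hb hc1).eq
    calc rg (n := n) k.1 k.2 * lamN a.1 b.1 * rg k.1 k.2
        = lamN a.1 b.1 * (rg k.1 k.2 * rg k.1 k.2) := by rw [hf]; group
      _ = lamN a.1 b.1 := by rw [rg_sq, mul_one]
  by_cases hc2 : a.1 < k.1 ∧ k.1 + 1 < b.1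
  · -- middle case
    rw [tr_fix (by omega) (by omega), tr_fix (by omega) (by omega), VL_of_lt hab]
    have hf := (lamN_mid k.2 hc2.1 hc2.2 hb).eq
    calc rg (n := n) k.1 k.2 * lamN a.1 b.1 * rg k.1 k.2
        = lamN a.1 b.1 * (rg k.1 k.2 * rg k.1 k.2) := by rw [hf]; group
      _ = lamN a.1 b.1 := by rw [rg_sq, mul_one]
  by_cases hc3 : k.1 = a.1 ∧ b.1 = k.1 + 1
  · -- inversion case
    have hta : (tr k a).1 = a.1 + 1 := by rw [tr_val, if_pos hc3.1.symm]; omega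
    have htb : (tr k b).1 = a.1 := by
      rw [tr_val, if_neg (by omega), if_pos (by omega)]; omega
    rw [VL_of_ge (by omega), hta, htb]
    have := lamN_conj_inv (n := n) (a := a.1) (by omega)
    rw [show b.1 = a.1 + 1 by omega]
    rw [show rg (n := n) k.1 k.2 = rg a.1 (by omega) from rg_congr _ _ hc3.1]
    exact this
  by_cases hc4 : k.1 = a.1 ∧ k.1 + 1 < b.1
  · have hta : (tr k a).1 = a.1 + 1 := by rw [tr_val, if_pos hc4.1.symm]; omega
    have htb : (tr k b).1 = b.1 := by rw [tr_val, if_neg (by omega), if_neg (by omega)]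
    rw [VL_of_lt (by omega), hta, htb]
    rw [show rg (n := n) k.1 k.2 = rg a.1 (by omega) from rg_congr _ _ hc4.1]
    exact lamN_conj_a (by omega) hb (by omega)
  by_cases hc5 : k.1 + 1 = a.1
  · have hta : (tr k a).1 = k.1 := by
      rw [tr_val, if_neg (by omega), if_pos (by omega)]
    have htb : (tr k b).1 = b.1 := by rw [tr_val, if_neg (by omega), if_neg (by omega)]
    rw [VL_of_lt (by omega), hta, htb]
    rw [show a.1 = k.1 + 1 by omega]
    exact lamN_conj_a1 (by omega) hb hk
  by_cases hc6 : k.1 = b.1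
  · have hta : (tr k a).1 = a.1 := by rw [tr_val, if_neg (by omega), if_neg (by omega)]
    have htb : (tr k b).1 = b.1 + 1 := by rw [tr_val, if_pos hc6.symm]; omega
    rw [VL_of_lt (by omega), hta, htb]
    rw [show rg (n := n) k.1 k.2 = rg b.1 (by omega) from rg_congr _ _ hc6]
    exact (lamN_step hab (by omega)).symm
  -- remaining case : k.1 + 1 = b.1, a.1 < k.1
  have hc7 : k.1 + 1 = b.1 ∧ a.1 < k.1 := by omega
  have hta : (tr k a).1 = a.1 := by rw [tr_val, if_neg (by omega), if_neg (by omega)]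
  have htb : (tr k b).1 = k.1 := by rw [tr_val, if_neg (by omega), if_pos (by omega)]
  rw [VL_of_lt (by omega), hta, htb]
  rw [show b.1 = k.1 + 1 by omega]
  exact lamN_conj_k hc7.2 hk

/-- The master conjugation formula. -/
lemma conj_base (k : Fin (n-1)) (a b : Fin n) :
    rg k.1 k.2 * VL a b * rg k.1 k.2 = VL (tr k a) (tr k b) := by
  rcases lt_trichotomy a.1 b.1 with h | h | h
  · exact conj_base_lt k a b h
  · have : a = b := Fin.ext h
    subst this
    rw [VL_refl, VL_refl, mul_one, rg_sq]
  · calc rg (n := n) k.1 k.2 * VL a b * rg k.1 k.2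
        = (rg k.1 k.2 * VL b a * rg k.1 k.2)⁻¹ := by
          rw [mul_inv_rev, mul_inv_rev, rg_inv, VL_inv]; group
      _ = (VL (tr k b) (tr k a))⁻¹ := by rw [conj_base_lt k b a h]
      _ = VL (tr k a) (tr k b) := VL_inv _ _

lemma perm_sg {k : ℕ} (h : k < n-1) : perm n (sg k h) = tr ⟨k, h⟩ := by
  simp [perm, sg, PresentedGroup.toGroup.of]

lemma perm_rg {k : ℕ} (h : k < n-1) : perm n (rg k h) = tr ⟨k, h⟩ := by
  simp [perm, rg, PresentedGroup.toGroup.of]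

lemma perm_lamN {a b : ℕ} (hab : a < b) (hb : b < n) : perm n (lamN a b) = 1 := by
  induction b using Nat.strong_induction_on with
  | _ b IH =>
    rcases Nat.eq_or_lt_of_le hab with hbase | hstep
    · rw [← hbase, lamN_base (by omega), map_mul, perm_sg, perm_rg, tr_sq]
    · obtain ⟨m, rfl⟩ : ∃ m, b = m + 1 := ⟨b - 1, by omega⟩
      rw [lamN_step (by omega) (by omega), map_mul, map_mul, perm_rg,
        IH m (by omega) (by omega) (by omega), mul_one, tr_sq]

lemma perm_VL (a b : Fin n) : perm n (VL a b) = 1 := by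
  rcases lt_trichotomy a.1 b.1 with h | h | h
  · rw [VL_of_lt h, perm_lamN h b.2]
  · rw [VL_of_ge (by omega), lamN_junk (by omega)]
    simp
  · rw [VL_of_ge (by omega), map_inv, perm_lamN h a.2, inv_one]

end VLdef

/-! ### Part A: the Coxeter presentation of the symmetric group -/

section Cox

/-- The Coxeter relations of type `A_{n-1}`. -/
def coxRels (n : ℕ) : Set (FreeGroup (Fin (n-1))) :=
  { w | (∃ i : Fin (n-1), w = .of i * .of i) ∨
        (∃ i j : Fin (n-1), (i : ℕ) + 2 ≤ (j : ℕ) ∧ w = ⁅FreeGroup.of i, FreeGroup.of j⁆) ∨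
        (∃ i j : Fin (n-1), (j : ℕ) = (i : ℕ) + 1 ∧
          w = .of i * .of j * .of i * (.of j * .of i * .of j)⁻¹) }

/-- The abstract Coxeter group of type `A_{n-1}`. -/
abbrev W (n : ℕ) := PresentedGroup (coxRels n)

variable {n : ℕ}

def gw (k : ℕ) (h : k < n-1) : W n := PresentedGroup.of ⟨k, h⟩

lemma relOneW {w : FreeGroup (Fin (n-1))} (h : w ∈ coxRels n) :
    (PresentedGroup.mk (coxRels n) w : W n) = 1 :=
  (QuotientGroup.eq_one_iff _).mpr (Subgroup.subset_normalClosure h)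

lemma mk_gw {i : Fin (n-1)} : PresentedGroup.mk (coxRels n) (.of i) = gw (n := n) i.1 i.2 := rfl

lemma gw_sq {k : ℕ} (h : k < n-1) : gw (n := n) k h * gw k h = 1 := by
  have := relOneW (n := n) (w := .of ⟨k,h⟩ * .of ⟨k,h⟩) (Or.inl ⟨⟨k,h⟩, rfl⟩)
  rwa [map_mul, mk_gw] at this

lemma gw_inv {k : ℕ} (h : k < n-1) : (gw (n := n) k h)⁻¹ = gw k h :=
  inv_eq_of_mul_eq_one_right (gw_sq h)

lemma gw_comm {i j : ℕ} (hi : i < n-1) (hj : j < n-1) (hij : i + 2 ≤ j) :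
    Commute (gw (n := n) i hi) (gw j hj) := by
  have := relOneW (n := n) (w := ⁅FreeGroup.of (⟨i,hi⟩ : Fin (n-1)), FreeGroup.of (⟨j,hj⟩ : Fin (n-1))⁆)
    (Or.inr (Or.inl ⟨⟨i,hi⟩, ⟨j,hj⟩, hij, rfl⟩))
  rw [map_commutatorElement, mk_gw, mk_gw] at this
  exact commutatorElement_eq_one_iff_commute.mp this

lemma gw_comm' {i j : ℕ} (hi : i < n-1) (hj : j < n-1) (hij : i + 2 ≤ j ∨ j + 2 ≤ i) :
    Commute (gw (n := n) i hi) (gw j hj) := by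
  rcases hij with h | h
  · exact gw_comm hi hj h
  · exact (gw_comm hj hi h).symm

lemma gw_braid {i : ℕ} (h : i + 1 < n-1) :
    gw (n := n) i (by omega) * gw (i+1) h * gw i (by omega)
      = gw (i+1) h * gw i (by omega) * gw (i+1) h := by
  have := relOneW (n := n)
    (w := .of ⟨i, by omega⟩ * .of ⟨i+1,h⟩ * .of ⟨i, by omega⟩
      * (.of ⟨i+1,h⟩ * .of ⟨i, by omega⟩ * .of ⟨i+1,h⟩)⁻¹)
    (Or.inr (Or.inr ⟨⟨i, by omega⟩, ⟨i+1,h⟩, rfl, rfl⟩))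
  simp only [map_mul, map_inv, mk_gw] at this
  exact mul_inv_eq_one.mp this

/-- The descending products `D_{k,j} = g_k g_{k-1} ⋯ g_j`. -/
def DW (k j : ℕ) : W n :=
  if h : j ≤ k ∧ k < n-1 then DW k (j+1) * gw j (by omega) else 1
  termination_by k + 1 - j
  decreasing_by omega

lemma DW_junk {k j : ℕ} (h : ¬(j ≤ k ∧ k < n-1)) : DW (n := n) k j = 1 := by
  rw [DW]; exact dif_neg h

lemma DW_step {k j : ℕ} (h : j ≤ k) (hk : k < n-1) :
    DW (n := n) k j = DW k (j+1) * gw j (by omega) := by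
  rw [DW]; exact dif_pos ⟨h, hk⟩

lemma DW_last {k : ℕ} (hk : k < n-1) : DW (n := n) k k = gw k hk := by
  rw [DW_step le_rfl hk, DW_junk (by omega), one_mul]

lemma DW_split_top {m : ℕ} (hk : m+1 < n-1) :
    ∀ d j, j + d = m + 1 → j ≤ m + 1 →
      DW (n := n) (m+1) j = gw (m+1) hk * DW m j := by
  intro d
  induction d with
  | zero =>
    intro j hj _
    have : j = m + 1 := by omega
    subst this
    rw [DW_last hk, DW_junk (k := m) (j := m+1) (by omega), mul_one]
  | succ d IH =>
    intro j hj _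
    have hjm : j ≤ m := by omega
    rw [DW_step (by omega) hk, DW_step hjm (by omega), IH (j+1) (by omega) (by omega),
      mul_assoc]

lemma DW_split {m k : ℕ} (hm : m ≤ k) (hk : k < n-1) :
    ∀ d j, j + d = m + 1 → j ≤ m + 1 →
      DW (n := n) k j = DW k (m+1) * DW m j := by
  intro d
  induction d with
  | zero =>
    intro j hj _
    have : j = m + 1 := by omega
    subst this
    rw [DW_junk (k := m) (j := m+1) (by omega), mul_one]
  | succ d IH =>
    intro j hj _
    have hjm : j ≤ m := by omega
    rw [DW_step (by omega) hk, DW_step hjm (by omega), IH (j+1) (by omega) (by omega),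
      mul_assoc]

lemma DW_comm_hi (t k j : ℕ) (ht : t < n-1) (h : k + 2 ≤ t) :
    Commute (gw (n := n) t ht) (DW k j) := by
  by_cases hc : j ≤ k ∧ k < n-1
  · rw [DW_step hc.1 hc.2]
    exact (DW_comm_hi t k (j+1) ht h).mul_right (gw_comm' ht (by omega) (by omega))
  · rw [DW_junk hc]; exact Commute.one_right _
  termination_by k + 1 - j
  decreasing_by omega

lemma DW_comm_lo (t k j : ℕ) (ht : t < n-1) (h : t + 2 ≤ j) :
    Commute (gw (n := n) t ht) (DW k j) := by
  by_cases hc : j ≤ k ∧ k < n-1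
  · rw [DW_step hc.1 hc.2]
    exact (DW_comm_lo t k (j+1) ht (by omega)).mul_right (gw_comm' ht (by omega) (by omega))
  · rw [DW_junk hc]; exact Commute.one_right _
  termination_by k + 1 - j
  decreasing_by omega

/-- Key pass lemma: `D_{k,j} · g_{u+1} = g_u · D_{k,j}` for `j ≤ u < u+1 ≤ k`. -/
lemma DW_pass {u k j : ℕ} (hj : j ≤ u) (hu : u + 1 ≤ k) (hk : k < n-1) :
    DW (n := n) k j * gw (u+1) (by omega) = gw u (by omega) * DW k j := by
  have hun : u + 1 < n - 1 := by omega
  have hstar : DW (n := n) (u+1) j * gw (u+1) hun = gw u (by omega) * DW (u+1) j := by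
    rcases Nat.eq_zero_or_eq_succ_pred u with hu0 | husucc
    · -- u = 0, j = 0
      subst hu0
      have hj0 : j = 0 := by omega
      subst hj0
      rw [DW_split_top hun 1 0 rfl (by omega), DW_last (by omega)]
      calc gw (n := n) 1 hun * gw 0 (by omega) * gw (1) hun
          = gw 0 (by omega) * gw 1 hun * gw 0 (by omega) := by
            rw [← gw_braid (n := n) (show 0 + 1 < n - 1 from hun)]
        _ = gw 0 (by omega) * (gw 1 hun * gw 0 (by omega)) := by group
    · -- u = v + 1
      obtain ⟨v, rfl⟩ : ∃ v, u = v + 1 := ⟨u - 1, by omega⟩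
      have h1 : DW (n := n) (v+1+1) j = gw (v+1+1) hun * (gw (v+1) (by omega) * DW v j) := by
        rw [DW_split_top hun (v+1+1-j) j (by omega) (by omega),
          DW_split_top (by omega) (v+1-j) j (by omega) (by omega)]
      have hcomm : Commute (gw (n := n) (v+1+1) hun) (DW v j) :=
        DW_comm_hi _ _ _ _ (by omega)
      rw [h1]
      calc gw (n := n) (v+1+1) hun * (gw (v+1) (by omega) * DW v j) * gw (v+1+1) hun
          = gw (v+1+1) hun * gw (v+1) (by omega) * (DW v j * gw (v+1+1) hun) := by group
        _ = gw (v+1+1) hun * gw (v+1) (by omega) * (gw (v+1+1) hun * DW v j) := by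
            rw [← hcomm.eq]
        _ = (gw (v+1+1) hun * gw (v+1) (by omega) * gw (v+1+1) hun) * DW v j := by
            group
        _ = (gw (v+1) (by omega) * gw (v+1+1) hun * gw (v+1) (by omega)) * DW v j := by
            rw [← gw_braid (n := n) (show v+1+1 < n-1 from hun)]
        _ = gw (v+1) (by omega) * (gw (v+1+1) hun * (gw (v+1) (by omega) * DW v j)) := by
            group
  calc DW (n := n) k j * gw (u+1) (by omega)
      = DW k (u+2) * (DW (u+1) j * gw (u+1) hun) := by
        rw [DW_split (show u+1 ≤ k from hu) hk (u+2-j) j (by omega) (by omega)]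
        group
    _ = DW k (u+2) * (gw u (by omega) * DW (u+1) j) := by rw [hstar]
    _ = (gw u (by omega) * DW k (u+2)) * DW (u+1) j := by
        rw [(DW_comm_lo u k (u+2) (by omega) (by omega)).eq]
        group
    _ = gw u (by omega) * DW k j := by
        rw [DW_split (show u+1 ≤ k from hu) hk (u+2-j) j (by omega) (by omega)]
        group

end Cox

/-! ### Part A2: normal form and cardinality bound for `W n` -/

section Card
variable {n : ℕ}

/-- Partial normal-form products. -/
def FW (c : ℕ → ℕ) (k : ℕ) : W n :=
  ((List.range k).map (fun m => DW m (c m))).prod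

lemma FW_zero (c : ℕ → ℕ) : FW (n := n) c 0 = 1 := rfl

lemma FW_succ (c : ℕ → ℕ) (k : ℕ) : FW (n := n) c (k+1) = FW c k * DW k (c k) := by
  rw [FW, FW, List.range_succ, List.map_append, List.prod_append]
  simp

lemma FW_congr {c c' : ℕ → ℕ} {k : ℕ} (h : ∀ m < k, c m = c' m) :
    FW (n := n) c k = FW c' k := by
  unfold FW
  congr 1
  apply List.map_congr_left
  intro m hm
  rw [h m (List.mem_range.mp hm)]

/-- `1` has a normal form. -/
lemma FW_one : ∀ k : ℕ, FW (n := n) (fun m => m+1) k = 1 := by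
  intro k
  induction k with
  | zero => rfl
  | succ k IH => rw [FW_succ, IH, DW_junk (by omega), mul_one]

/-- Closure of the set of normal forms under right multiplication by a generator. -/
lemma FW_mul_g : ∀ k, k ≤ n-1 → ∀ c : ℕ → ℕ, (∀ m, c m ≤ m+1) →
    ∀ t (htn : t < n-1), t < k →
    ∃ c' : ℕ → ℕ, (∀ m, c' m ≤ m+1) ∧ FW (n := n) c k * gw t htn = FW c' k := by
  intro k
  induction k with
  | zero => exact fun _ _ _ _ _ ht => absurd ht (by omega)
  | succ k IH =>
    intro hkn c hc t htn ht
    have hck : c k ≤ k + 1 := hc k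
    rcases lt_trichotomy (c k) t with hlt | heq | hgt
    · -- c k < t : pass down as g_{t-1}
      obtain ⟨u, rfl⟩ : ∃ u, t = u + 1 := ⟨t - 1, by omega⟩
      have hpass : DW (n := n) k (c k) * gw (u+1) (by omega) = gw u (by omega) * DW k (c k) :=
        DW_pass (by omega) (by omega) (by omega)
      obtain ⟨c'', hc'', hFW⟩ := IH (by omega) c hc u (by omega) (by omega)
      refine ⟨Function.update c'' k (c k), ?_, ?_⟩
      · intro m
        rcases eq_or_ne m k with rfl | hm
        · rw [Function.update_self]; exact hck
        · rw [Function.update_of_ne hm]; exact hc'' m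
      · rw [FW_succ, FW_succ, mul_assoc, hpass, ← mul_assoc, hFW]
        congr 1
        · exact FW_congr (fun m hm => (Function.update_of_ne (by omega) _ _).symm)
        · rw [Function.update_self]
    · -- c k = t : absorb, c k becomes t+1
      subst heq
      refine ⟨Function.update c k (c k + 1), ?_, ?_⟩
      · intro m
        rcases eq_or_ne m k with rfl | hm
        · rw [Function.update_self]; omega
        · rw [Function.update_of_ne hm]; exact hc m
      · rw [FW_succ, FW_succ, mul_assoc]
        congr 1
        · exact FW_congr (fun m hm => (Function.update_of_ne (by omega) _ _).symm)
        · rw [Function.update_self, DW_step (by omega) (by omega), mul_assoc, gw_sq, mul_one]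
    · -- c k > t
      rcases Nat.eq_or_lt_of_le hgt with heq1 | hgt2
      · -- c k = t+1 : absorb, c k becomes t
        refine ⟨Function.update c k t, ?_, ?_⟩
        · intro m
          rcases eq_or_ne m k with rfl | hm
          · rw [Function.update_self]; omega
          · rw [Function.update_of_ne hm]; exact hc m
        · rw [FW_succ, FW_succ, mul_assoc]
          congr 1
          · exact FW_congr (fun m hm => (Function.update_of_ne (by omega) _ _).symm)
          · rw [Function.update_self, ← heq1, ← DW_step (by omega) (by omega)]
      · -- c k ≥ t+2 : commute past the block
        have hcomm : Commute (gw (n := n) t htn) (DW k (c k)) :=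
          DW_comm_lo t k (c k) htn (by omega)
        obtain ⟨c'', hc'', hFW⟩ := IH (by omega) c hc t htn (by omega)
        refine ⟨Function.update c'' k (c k), ?_, ?_⟩
        · intro m
          rcases eq_or_ne m k with rfl | hm
          · rw [Function.update_self]; exact hck
          · rw [Function.update_of_ne hm]; exact hc'' m
        · rw [FW_succ, FW_succ, mul_assoc, ← hcomm.eq, ← mul_assoc, hFW]
          congr 1
          · exact FW_congr (fun m hm => (Function.update_of_ne (by omega) _ _).symm)
          · rw [Function.update_self]

/-- Every element of `W n` has a normal form. -/
lemma W_norm (x : W n) : ∃ c : ℕ → ℕ, (∀ m, c m ≤ m+1) ∧ x = FW c (n-1) := by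
  -- x lies in the submonoid generated by the generators
  have hmem : x ∈ Submonoid.closure (Set.range (fun i : Fin (n-1) => gw (n := n) i.1 i.2)) := by
    set M := Submonoid.closure (Set.range (fun i : Fin (n-1) => gw (n := n) i.1 i.2)) with hM
    have hinv : ∀ y ∈ M, y⁻¹ ∈ M := by
      intro y hy
      induction hy using Submonoid.closure_induction with
      | mem z hz => obtain ⟨i, rfl⟩ := hz; rw [gw_inv]; exact Submonoid.subset_closure ⟨i, rfl⟩
      | one => simpa using Submonoid.one_mem M
      | mul a b _ _ ha hb => rw [mul_inv_rev]; exact Submonoid.mul_mem M hb ha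
    let H : Subgroup (W n) := { toSubmonoid := M, inv_mem' := fun {y} hy => hinv y hy }
    exact PresentedGroup.generated_by (coxRels n) H
      (fun j => Submonoid.subset_closure ⟨j, rfl⟩) x
  obtain ⟨l, hl, rfl⟩ := Submonoid.exists_list_of_mem_closure hmem
  clear hmem
  induction l using List.reverseRecOn with
  | nil => exact ⟨fun m => m+1, fun m => le_rfl, (FW_one _).symm⟩
  | append_singleton l g IHl =>
    obtain ⟨c, hc, hFW⟩ := IHl (fun y hy => hl y (List.mem_append_left _ hy))
    obtain ⟨i, rfl⟩ := hl g (List.mem_append_right _ (List.mem_singleton_self g))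
    rw [List.prod_append, List.prod_singleton, hFW]
    obtain ⟨c', hc', hmul⟩ := FW_mul_g (n-1) le_rfl c hc i.1 i.2 i.2
    exact ⟨c', hc', by simpa using hmul⟩

lemma factorial_prod (m : ℕ) : (∏ k : Fin m, (k.1 + 2)) = Nat.factorial (m+1) := by
  induction m with
  | zero => simp
  | succ m IH =>
    rw [Fin.prod_univ_castSucc]
    simp only [Fin.coe_castSucc, Fin.val_last]
    rw [IH, Nat.factorial_succ (m+1)]
    ring

instance : Finite (W n) := by
  refine Finite.of_surjective
    (fun c : (∀ k : Fin (n-1), Fin (k.1+2)) =>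
      FW (n := n) (fun m => if h : m < n-1 then (c ⟨m, h⟩ : ℕ) else m+1) (n-1)) ?_
  intro x
  obtain ⟨c, hc, rfl⟩ := W_norm x
  refine ⟨fun k => ⟨c k.1, by have := hc k.1; omega⟩, ?_⟩
  exact (FW_congr (fun m hm => by simp [show m < n-1 from hm])).symm

lemma card_W_le : Nat.card (W n) ≤ Nat.factorial n := by
  have hsur : Function.Surjective
      (fun c : (∀ k : Fin (n-1), Fin (k.1+2)) =>
        FW (n := n) (fun m => if h : m < n-1 then (c ⟨m, h⟩ : ℕ) else m+1) (n-1)) := by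
    intro x
    obtain ⟨c, hc, rfl⟩ := W_norm x
    refine ⟨fun k => ⟨c k.1, by have := hc k.1; omega⟩, ?_⟩
    exact (FW_congr (fun m hm => by simp [show m < n-1 from hm])).symm
  have h1 := Nat.card_le_card_of_surjective _ hsur
  have h2 : Nat.card (∀ k : Fin (n-1), Fin (k.1+2)) = Nat.factorial (n-1+1) := by
    rw [Nat.card_eq_fintype_card, Fintype.card_pi]
    have := factorial_prod (n-1)
    simp only [Fintype.card_fin] at *
    rw [this]
  have h3 : Nat.factorial (n-1+1) = Nat.factorial n := by
    rcases (by omega : n - 1 + 1 = n ∨ n = 0) with h | h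
    · rw [h]
    · subst h; rfl
  omega

end Card

/-! ### Part A3: `W n ≃ S_n`, and the section `S_n → VT n` -/

section Sec
variable {n : ℕ}

/-- The projection `W n →* S_n`. -/
def permW (n : ℕ) : W n →* Equiv.Perm (Fin n) :=
  PresentedGroup.toGroup (f := tr) (by
    rintro w (⟨i, rfl⟩ | ⟨i, j, hij, rfl⟩ | ⟨i, j, hij, rfl⟩)
    · simp [tr_sq]
    · rw [map_commutatorElement]
      simp only [FreeGroup.lift_apply_of]
      exact commutatorElement_eq_one_iff_commute.mpr (tr_commute hij)
    · simp only [map_mul, map_inv, FreeGroup.lift_apply_of]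
      rw [tr_braid hij, mul_inv_cancel])

lemma permW_of (i : Fin (n-1)) : permW n (PresentedGroup.of i) = tr i :=
  PresentedGroup.toGroup.of _

/-- The canonical homomorphism `W n →* VT n`, `τ_i ↦ ρ_i`. -/
def cwHom (n : ℕ) : W n →* VT n :=
  PresentedGroup.toGroup (f := fun i => rg (n := n) i.1 i.2) (by
    rintro w (⟨i, rfl⟩ | ⟨i, j, hij, rfl⟩ | ⟨i, j, hij, rfl⟩)
    · simp only [map_mul, FreeGroup.lift_apply_of]
      exact rg_sq i.2
    · rw [map_commutatorElement]
      simp only [FreeGroup.lift_apply_of]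
      exact commutatorElement_eq_one_iff_commute.mpr (rr_comm i.2 j.2 hij)
    · simp only [map_mul, map_inv, FreeGroup.lift_apply_of]
      rw [show rg (n := n) j.1 j.2 = rg (i.1+1) (by omega) from rg_congr _ _ hij,
        rg_braid (n := n) (show i.1 + 1 < n - 1 by omega), mul_inv_cancel])

lemma cwHom_of (i : Fin (n-1)) : cwHom n (PresentedGroup.of i) = rg i.1 i.2 :=
  PresentedGroup.toGroup.of _

lemma perm_cwHom (x : W n) : perm n (cwHom n x) = permW n x := by
  have h : (perm n).comp (cwHom n) = permW n := by
    apply PresentedGroup.ext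
    intro i
    rw [MonoidHom.comp_apply, cwHom_of, permW_of, perm_rg]
  rw [← h, MonoidHom.comp_apply]

lemma mclosure_tr (hn : 1 ≤ n) :
    Submonoid.closure (Set.range (tr : Fin (n-1) → Equiv.Perm (Fin n))) = ⊤ := by
  obtain ⟨m, rfl⟩ : ∃ m, n = m + 1 := ⟨n-1, by omega⟩
  have heq : (tr : Fin (m+1-1) → Equiv.Perm (Fin (m+1)))
      = fun i : Fin m => Equiv.swap i.castSucc i.succ := by
    funext i
    unfold tr
    congr 1 <;> exact Fin.ext rfl
  rw [heq, Equiv.Perm.mclosure_swap_castSucc_succ m]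

lemma permW_surjective (hn : 1 ≤ n) : Function.Surjective (permW n) := by
  intro σ
  have hσ : σ ∈ Submonoid.closure (Set.range (tr : Fin (n-1) → Equiv.Perm (Fin n))) := by
    rw [mclosure_tr hn]; trivial
  induction hσ using Submonoid.closure_induction with
  | mem z hz => obtain ⟨i, rfl⟩ := hz; exact ⟨PresentedGroup.of i, permW_of i⟩
  | one => exact ⟨1, map_one _⟩
  | mul a b _ _ ha hb =>
    obtain ⟨x, rfl⟩ := ha
    obtain ⟨y, rfl⟩ := hb
    exact ⟨x * y, map_mul _ _ _⟩

lemma permW_bijective (hn : 1 ≤ n) : Function.Bijective (permW n) := by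
  rw [Nat.bijective_iff_surjective_and_card]
  refine ⟨permW_surjective hn, le_antisymm ?_ (Nat.card_le_card_of_surjective _
    (permW_surjective hn))⟩
  have h1 : Nat.card (Equiv.Perm (Fin n)) = Nat.factorial n := by
    rw [Nat.card_eq_fintype_card, Fintype.card_perm, Fintype.card_fin]
  rw [h1]
  exact card_W_le

/-- The group-theoretic section `S_n →* VT n` of `perm n`. -/
noncomputable def secHom (hn : 1 ≤ n) : Equiv.Perm (Fin n) →* VT n :=
  (cwHom n).comp (MulEquiv.ofBijective (permW n) (permW_bijective hn)).symm.toMonoidHom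

lemma secHom_tr (hn : 1 ≤ n) (k : Fin (n-1)) : secHom hn (tr k) = rg k.1 k.2 := by
  have h1 : (MulEquiv.ofBijective (permW n) (permW_bijective hn)).symm (tr k)
      = PresentedGroup.of k := by
    rw [MulEquiv.symm_apply_eq, MulEquiv.ofBijective_apply, permW_of]
  rw [secHom, MonoidHom.comp_apply, MulEquiv.coe_toMonoidHom, h1, cwHom_of]

lemma perm_secHom (hn : 1 ≤ n) (σ : Equiv.Perm (Fin n)) : perm n (secHom hn σ) = σ := by
  rw [secHom, MonoidHom.comp_apply, MulEquiv.coe_toMonoidHom, perm_cwHom]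
  have : permW n ((MulEquiv.ofBijective (permW n) (permW_bijective hn)).symm σ)
      = (MulEquiv.ofBijective (permW n) (permW_bijective hn))
        ((MulEquiv.ofBijective (permW n) (permW_bijective hn)).symm σ) := rfl
  rw [this, MulEquiv.apply_symm_apply]

/-- Conjugation by `secHom σ` permutes the generators `VL`. -/
lemma secHom_conj (hn : 1 ≤ n) (σ : Equiv.Perm (Fin n)) (a b : Fin n) :
    secHom hn σ * VL a b * (secHom hn σ)⁻¹ = VL (σ a) (σ b) := by
  have hσ : σ ∈ Submonoid.closure (Set.range (tr : Fin (n-1) → Equiv.Perm (Fin n))) := by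
    rw [mclosure_tr hn]; trivial
  induction hσ using Submonoid.closure_induction generalizing a b with
  | mem z hz =>
    obtain ⟨i, rfl⟩ := hz
    rw [secHom_tr hn, show (rg (n := n) i.1 i.2)⁻¹ = rg i.1 i.2 from rg_inv i.2]
    exact conj_base i a b
  | one => simp
  | mul x y _ _ hx hy =>
    rw [map_mul, mul_inv_rev]
    calc secHom hn x * secHom hn y * VL a b * ((secHom hn y)⁻¹ * (secHom hn x)⁻¹)
        = secHom hn x * (secHom hn y * VL a b * (secHom hn y)⁻¹) * (secHom hn x)⁻¹ := by
          group
      _ = secHom hn x * VL (y a) (y b) * (secHom hn x)⁻¹ := by rw [hy]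
      _ = VL (x (y a)) (x (y b)) := hx _ _
      _ = VL ((x*y) a) ((x*y) b) := by rfl

end Sec

/-! ### Part C: the RAAG `G n`, the `S_n`-action, and `φ : VT n →* G n ⋊ S_n` -/

section Raag
variable {n : ℕ}

/-- The right-angled Artin group on the `λ_{i,j}`. -/
abbrev Gn (n : ℕ) := PresentedGroup (raagRels n)

lemma relOneG {w : FreeGroup (Vtx n)} (h : w ∈ raagRels n) :
    (PresentedGroup.mk (raagRels n) w : Gn n) = 1 :=
  (QuotientGroup.eq_one_iff _).mpr (Subgroup.subset_normalClosure h)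

lemma ofG_comm {p q : Vtx n} (h : DisjV p q) :
    Commute (PresentedGroup.of (rels := raagRels n) p) (PresentedGroup.of q) := by
  have := relOneG (n := n) (w := ⁅FreeGroup.of p, FreeGroup.of q⁆) ⟨p, q, h, rfl⟩
  rw [map_commutatorElement] at this
  exact commutatorElement_eq_one_iff_commute.mp this

/-- The generator `λ_{a,b}` of the RAAG, with `λ_{b,a} = λ_{a,b}⁻¹` convention. -/
def vG (a b : Fin n) : Gn n :=
  if h : a < b then PresentedGroup.of ⟨(a, b), h⟩
  else if h' : b < a then (PresentedGroup.of ⟨(b, a), h'⟩)⁻¹ else 1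

lemma vG_lt {a b : Fin n} (h : a < b) : vG a b = PresentedGroup.of ⟨(a, b), h⟩ := dif_pos h

lemma vG_gt {a b : Fin n} (h : b < a) :
    vG a b = (PresentedGroup.of ⟨(b, a), h⟩)⁻¹ := by
  rw [vG, dif_neg (by omega), dif_pos h]

lemma vG_refl (a : Fin n) : vG a a = 1 := by
  rw [vG, dif_neg (lt_irrefl a), dif_neg (lt_irrefl a)]

lemma vG_inv (a b : Fin n) : (vG a b)⁻¹ = vG b a := by
  rcases lt_trichotomy a b with h | h | h
  · rw [vG_lt h, vG_gt h]
  · subst h; rw [vG_refl, inv_one]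
  · rw [vG_gt h, vG_lt h, inv_inv]

lemma vG_comm {a b c d : Fin n} (h1 : a ≠ c) (h2 : a ≠ d) (h3 : b ≠ c) (h4 : b ≠ d) :
    Commute (vG a b) (vG c d) := by
  have key : ∀ (x y z w : Fin n) (hxy : x < y) (hzw : z < w), x ≠ z → x ≠ w → y ≠ z → y ≠ w →
      Commute (vG x y) (vG z w) := by
    intro x y z w hxy hzw k1 k2 k3 k4
    rw [vG_lt hxy, vG_lt hzw]
    exact ofG_comm ⟨k1, k2, k3, k4⟩
  rcases lt_trichotomy a b with hab | hab | hab
  · rcases lt_trichotomy c d with hcd | hcd | hcd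
    · exact key a b c d hab hcd h1 h2 h3 h4
    · subst hcd; rw [vG_refl]; exact Commute.one_right _
    · rw [show vG c d = (vG d c)⁻¹ from (vG_inv d c).symm]
      exact (key a b d c hab hcd h2 h1 h4 h3).inv_right
  · subst hab; rw [vG_refl]; exact Commute.one_left _
  · rcases lt_trichotomy c d with hcd | hcd | hcd
    · rw [show vG a b = (vG b a)⁻¹ from (vG_inv b a).symm]
      exact (key b a c d hab hcd h3 h4 h1 h2).inv_left
    · subst hcd; rw [vG_refl]; exact Commute.one_right _
    · rw [show vG a b = (vG b a)⁻¹ from (vG_inv b a).symm,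
        show vG c d = (vG d c)⁻¹ from (vG_inv d c).symm]
      exact ((key b a d c hab hcd h4 h3 h2 h1).inv_left).inv_right

/-- The action of a permutation on the RAAG, as a homomorphism. -/
def actHom (σ : Equiv.Perm (Fin n)) : Gn n →* Gn n :=
  PresentedGroup.toGroup (f := fun p => vG (σ p.1.1) (σ p.1.2)) (by
    rintro w ⟨p, q, hpq, rfl⟩
    rw [map_commutatorElement]
    simp only [FreeGroup.lift_apply_of]
    exact commutatorElement_eq_one_iff_commute.mpr (vG_comm (σ.injective.ne hpq.1)
      (σ.injective.ne hpq.2.1) (σ.injective.ne hpq.2.2.1) (σ.injective.ne hpq.2.2.2)))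

lemma actHom_of (σ : Equiv.Perm (Fin n)) (p : Vtx n) :
    actHom σ (PresentedGroup.of p) = vG (σ p.1.1) (σ p.1.2) :=
  PresentedGroup.toGroup.of _

lemma actHom_vG (σ : Equiv.Perm (Fin n)) (a b : Fin n) :
    actHom σ (vG a b) = vG (σ a) (σ b) := by
  rcases lt_trichotomy a b with h | h | h
  · rw [vG_lt h, actHom_of]
  · subst h; rw [vG_refl, map_one, vG_refl]
  · rw [vG_gt h, map_inv, actHom_of, vG_inv]

lemma actHom_comp (σ τ : Equiv.Perm (Fin n)) :
    actHom (n := n) (σ * τ) = (actHom σ).comp (actHom τ) := by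
  apply PresentedGroup.ext
  intro p
  rw [actHom_of, MonoidHom.comp_apply, actHom_of, actHom_vG]
  rfl

lemma actHom_one : actHom (n := n) 1 = MonoidHom.id _ := by
  apply PresentedGroup.ext
  intro p
  rw [actHom_of]
  simp only [Equiv.Perm.one_apply, MonoidHom.id_apply]
  exact vG_lt p.2

lemma actHom_inv_cancel (σ : Equiv.Perm (Fin n)) (x : Gn n) :
    actHom σ⁻¹ (actHom σ x) = x := by
  rw [← MonoidHom.comp_apply, ← actHom_comp, inv_mul_cancel, actHom_one, MonoidHom.id_apply]

lemma actHom_cancel_inv (σ : Equiv.Perm (Fin n)) (x : Gn n) :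
    actHom σ (actHom σ⁻¹ x) = x := by
  rw [← MonoidHom.comp_apply, ← actHom_comp, mul_inv_cancel, actHom_one, MonoidHom.id_apply]

/-- The action `S_n →* Aut(G n)`. -/
def actAut (n : ℕ) : Equiv.Perm (Fin n) →* MulAut (Gn n) where
  toFun σ :=
    { toFun := actHom σ
      invFun := actHom σ⁻¹
      left_inv := actHom_inv_cancel σ
      right_inv := actHom_cancel_inv σ
      map_mul' := map_mul _ }
  map_one' := by
    ext x
    simp only [MulEquiv.coe_mk, Equiv.coe_fn_mk]
    rw [actHom_one]
    rfl
  map_mul' σ τ := by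
    ext x
    simp only [MulEquiv.coe_mk, Equiv.coe_fn_mk, MulAut.mul_apply]
    rw [actHom_comp]
    rfl

lemma actAut_apply (σ : Equiv.Perm (Fin n)) (x : Gn n) : actAut n σ x = actHom σ x := rfl

end Raag

/-! ### Part C2: the homomorphism `φ : VT n →* G n ⋊ S_n` -/

section Phi
variable {n : ℕ}

/-- The first strand index of generator `s_i`/`ρ_i`, as an element of `Fin n`. -/
def finA (i : Fin (n-1)) : Fin n := ⟨i.1, by have := i.2; omega⟩

/-- The second strand index. -/
def finB (i : Fin (n-1)) : Fin n := ⟨i.1+1, by have := i.2; omega⟩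

lemma finA_lt_finB (i : Fin (n-1)) : finA i < finB i := by
  simp [finA, finB, Fin.lt_def]

/-- `λ_{i,i+1}` as an element of the RAAG. -/
def vGp (i : Fin (n-1)) : Gn n := vG (finA i) (finB i)

lemma tr_finA (i : Fin (n-1)) : tr i (finA i) = finB i := by
  apply Fin.ext
  rw [tr_val]
  simp [finA, finB]

lemma tr_finB (i : Fin (n-1)) : tr i (finB i) = finA i := by
  apply Fin.ext
  rw [tr_val]
  simp [finA, finB]

lemma tr_far_fix {i : Fin (n-1)} {x : Fin n} (h1 : x.1 ≠ i.1) (h2 : x.1 ≠ i.1+1) :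
    tr i x = x := tr_fix h1 h2

/-- The target semidirect product. -/
abbrev SD (n : ℕ) := SemidirectProduct (Gn n) (Equiv.Perm (Fin n)) (actAut n)

lemma sd_mul (x y : Gn n) (σ τ : Equiv.Perm (Fin n)) :
    (⟨x, σ⟩ : SD n) * ⟨y, τ⟩ = ⟨x * actHom σ y, σ * τ⟩ := rfl

/-- images of the generators -/
def sdS (i : Fin (n-1)) : SD n := ⟨vGp i, tr i⟩
def sdR (i : Fin (n-1)) : SD n := ⟨1, tr i⟩

lemma sdR_mul_sdR (i j : Fin (n-1)) : sdR (n := n) i * sdR j = ⟨1, tr i * tr j⟩ := by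
  simp only [sdR, sd_mul, map_one, mul_one]

lemma sdS_sq (i : Fin (n-1)) : sdS (n := n) i * sdS i = 1 := by
  have h1 : actHom (tr i) (vGp i) = (vGp (n := n) i)⁻¹ := by
    rw [vGp, actHom_vG, tr_finA, tr_finB, ← vG_inv]
  simp only [sdS, sd_mul, h1, mul_inv_cancel, tr_sq]
  rfl

lemma vGp_far_fix {i j : Fin (n-1)} (h : i.1 + 2 ≤ j.1 ∨ j.1 + 2 ≤ i.1) :
    actHom (tr i) (vGp j) = vGp (n := n) j := by
  rw [vGp, actHom_vG, tr_far_fix (by simp [finA]; omega) (by simp [finA]; omega),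
    tr_far_fix (by simp [finB]; omega) (by simp [finB]; omega)]

lemma vGp_comm {i j : Fin (n-1)} (h : i.1 + 2 ≤ j.1) :
    Commute (vGp (n := n) i) (vGp j) := by
  apply vG_comm <;> (apply Fin.ne_of_val_ne; simp [finA, finB]; omega)

lemma sdS_comm {i j : Fin (n-1)} (h : i.1 + 2 ≤ j.1) :
    Commute (sdS (n := n) i) (sdS j) := by
  rw [Commute, SemiconjBy]
  simp only [sdS, sd_mul, vGp_far_fix (Or.inl h), vGp_far_fix (Or.inr h)]
  rw [SemidirectProduct.ext_iff]; dsimp only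
  exact ⟨(vGp_comm h).eq, (tr_commute h).eq⟩

lemma sdR_comm {i j : Fin (n-1)} (h : i.1 + 2 ≤ j.1) :
    Commute (sdR (n := n) i) (sdR j) := by
  rw [Commute, SemiconjBy]
  simp only [sdR, sd_mul, map_one, mul_one]
  rw [SemidirectProduct.ext_iff]; dsimp only
  exact ⟨rfl, (tr_commute h).eq⟩

lemma sdRS_comm {i j : Fin (n-1)} (h : i.1 + 2 ≤ j.1) :
    Commute (sdR (n := n) i) (sdS j) := by
  rw [Commute, SemiconjBy]
  simp only [sdR, sdS, sd_mul, map_one, mul_one, one_mul, vGp_far_fix (Or.inl h)]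
  rw [SemidirectProduct.ext_iff]; dsimp only
  exact ⟨rfl, (tr_commute h).eq⟩

lemma sdSR_comm {i j : Fin (n-1)} (h : i.1 + 2 ≤ j.1) :
    Commute (sdS (n := n) i) (sdR j) := by
  rw [Commute, SemiconjBy]
  simp only [sdR, sdS, sd_mul, map_one, mul_one, one_mul, vGp_far_fix (Or.inr h)]
  rw [SemidirectProduct.ext_iff]; dsimp only
  exact ⟨rfl, (tr_commute h).eq⟩

lemma sdR_braid {i j : Fin (n-1)} (hij : (j : ℕ) = (i : ℕ) + 1) :
    sdR (n := n) i * sdR j * sdR i = sdR j * sdR i * sdR j := by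
  simp only [sdR, sd_mul, map_one, mul_one]
  rw [SemidirectProduct.ext_iff]; dsimp only
  exact ⟨rfl, tr_braid hij⟩

lemma sd_mixed_braid {i j : Fin (n-1)} (hij : (j : ℕ) = (i : ℕ) + 1) :
    sdR (n := n) i * sdR j * sdS i = sdS j * sdR i * sdR j := by
  simp only [sdR, sdS, sd_mul, map_one, mul_one, one_mul]
  have hBA : finB i = finA (n := n) j := by
    apply Fin.ext
    simp [finA, finB, hij]
  have e1 : (tr i * tr j) (finA i) = finA (n := n) j := by
    rw [Equiv.Perm.mul_apply,
      tr_far_fix (i := j) (x := finA i) (by simp [finA]; omega) (by simp [finA]; omega),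
      tr_finA, hBA]
  have e2 : (tr i * tr j) (finB i) = finB (n := n) j := by
    rw [Equiv.Perm.mul_apply, hBA, tr_finA,
      tr_far_fix (i := i) (x := finB j) (by simp [finB]; omega) (by simp [finB]; omega)]
  rw [SemidirectProduct.ext_iff]; dsimp only
  constructor
  · rw [vGp, actHom_vG, e1, e2, vGp]
  · exact tr_braid hij

/-- The homomorphism `φ : VT n →* G n ⋊ S_n`. -/
def phi (n : ℕ) : VT n →* SD n :=
  PresentedGroup.toGroup (f := Sum.elim sdS sdR) (by
    rintro w (⟨i, rfl⟩ | ⟨i, j, hij, rfl⟩ | ⟨i, rfl⟩ | ⟨i, j, hij, rfl⟩ |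
      ⟨i, j, hij, rfl⟩ | ⟨i, j, hij, (rfl | rfl)⟩ | ⟨i, j, hij, rfl⟩)
    · simp only [fs, map_mul, FreeGroup.lift_apply_of, Sum.elim_inl]
      exact sdS_sq i
    · rw [map_commutatorElement]
      simp only [fs, FreeGroup.lift_apply_of, Sum.elim_inl]
      exact commutatorElement_eq_one_iff_commute.mpr (sdS_comm hij)
    · simp only [fr, map_mul, FreeGroup.lift_apply_of, Sum.elim_inr]
      rw [sdR_mul_sdR, tr_sq]
      rfl
    · rw [map_commutatorElement]
      simp only [fr, FreeGroup.lift_apply_of, Sum.elim_inr]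
      exact commutatorElement_eq_one_iff_commute.mpr (sdR_comm hij)
    · simp only [fr, map_mul, map_inv, FreeGroup.lift_apply_of, Sum.elim_inr]
      rw [sdR_braid hij, mul_inv_cancel]
    · rw [map_commutatorElement]
      simp only [fr, fs, FreeGroup.lift_apply_of, Sum.elim_inr, Sum.elim_inl]
      exact commutatorElement_eq_one_iff_commute.mpr (sdRS_comm hij)
    · rw [map_commutatorElement]
      simp only [fr, fs, FreeGroup.lift_apply_of, Sum.elim_inr, Sum.elim_inl]
      exact commutatorElement_eq_one_iff_commute.mpr (sdSR_comm hij)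
    · simp only [fr, fs, map_mul, map_inv, FreeGroup.lift_apply_of, Sum.elim_inr, Sum.elim_inl]
      rw [sd_mixed_braid hij, mul_inv_cancel])

lemma phi_sg {k : ℕ} (h : k < n-1) : phi n (sg k h) = sdS ⟨k, h⟩ :=
  PresentedGroup.toGroup.of _

lemma phi_rg {k : ℕ} (h : k < n-1) : phi n (rg k h) = sdR ⟨k, h⟩ :=
  PresentedGroup.toGroup.of _

lemma phi_right (x : VT n) : (phi n x).right = perm n x := by
  have h : (SemidirectProduct.rightHom.comp (phi n)) = perm n := by
    apply PresentedGroup.ext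
    rintro (i | i)
    · rw [MonoidHom.comp_apply,
        show (PresentedGroup.of (rels := vtRels n) (Sum.inl i)) = sg i.1 i.2 from rfl,
        phi_sg, show perm n (sg i.1 i.2) = tr ⟨i.1, i.2⟩ from perm_sg i.2]
      rfl
    · rw [MonoidHom.comp_apply,
        show (PresentedGroup.of (rels := vtRels n) (Sum.inr i)) = rg i.1 i.2 from rfl,
        phi_rg, show perm n (rg i.1 i.2) = tr ⟨i.1, i.2⟩ from perm_rg i.2]
      rfl
  rw [← h]
  rfl

lemma phi_lamN {a b : ℕ} (hab : a < b) (hb : b < n) :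
    phi n (lamN a b) = ⟨vG ⟨a, by omega⟩ ⟨b, hb⟩, 1⟩ := by
  induction b using Nat.strong_induction_on with
  | _ b IH =>
    rcases Nat.eq_or_lt_of_le hab with hbase | hstep
    · have hbase' : b = a + 1 := hbase.symm
      subst hbase'
      have hb1 : a < n - 1 := by omega
      rw [lamN_base (by omega), map_mul, phi_sg hb1, phi_rg hb1]
      simp only [sdS, sdR, sd_mul, map_one, mul_one]
      rw [SemidirectProduct.ext_iff]; dsimp only
      refine ⟨?_, tr_sq _⟩
      rw [vGp]
      congr 1
    · obtain ⟨m, rfl⟩ : ∃ m, b = m + 1 := ⟨b - 1, by omega⟩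
      have hm1 : m < n - 1 := by omega
      rw [lamN_step (by omega) (by omega), map_mul, map_mul, phi_rg hm1,
        IH m (by omega) (by omega) (by omega)]
      simp only [sdR, sd_mul, map_one, mul_one, one_mul]
      have e1 : (tr ⟨m, hm1⟩) (⟨a, by omega⟩ : Fin n) = ⟨a, by omega⟩ :=
        tr_far_fix (by simp; omega) (by simp; omega)
      have e2 : (tr ⟨m, hm1⟩) (⟨m, by omega⟩ : Fin n) = ⟨m+1, by omega⟩ := by
        apply Fin.ext
        rw [tr_val]
        simp
      rw [SemidirectProduct.ext_iff]; dsimp only; rw [actHom_vG, e1, e2]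
      exact ⟨rfl, tr_sq _⟩

lemma phi_VL (a b : Fin n) : phi n (VL a b) = ⟨vG a b, 1⟩ := by
  rcases lt_trichotomy a.1 b.1 with h | h | h
  · rw [VL_of_lt h]
    exact phi_lamN h b.2
  · have : a = b := Fin.ext h
    subst this
    rw [VL_refl, map_one, vG_refl]
    rfl
  · rw [VL_of_ge (by omega), map_inv, phi_lamN h a.2]
    apply SemidirectProduct.ext
    · simp only [SemidirectProduct.inv_left, SemidirectProduct.inv_right, inv_one, map_one]
      rw [MulAut.one_apply]
      exact vG_inv b a
    · simp

end Phi

/-! ### Part D: `ψ : G n →* VT n` and the final assembly -/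

section Psi
variable {n : ℕ}

lemma commute_of_conj {G : Type*} [Group G] {g x y : G}
    (h : Commute (g * x * g⁻¹) (g * y * g⁻¹)) : Commute x y := by
  have h' := h.eq
  have key : g * (x * y) * g⁻¹ = g * (y * x) * g⁻¹ := by
    calc g * (x * y) * g⁻¹ = (g * x * g⁻¹) * (g * y * g⁻¹) := by group
      _ = (g * y * g⁻¹) * (g * x * g⁻¹) := h'
      _ = g * (y * x) * g⁻¹ := by group
  exact mul_left_cancel (mul_right_cancel key)

lemma exists_perm_map_four {α : Type*} [Fintype α] [DecidableEq α] (f g : Fin 4 → α)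
    (hf : Function.Injective f) (hg : Function.Injective g) :
    ∃ σ : Equiv.Perm α, ∀ k, σ (f k) = g k := by
  classical
  let ef : Fin 4 ≃ Set.range f := Equiv.ofInjective f hf
  let eg : Fin 4 ≃ Set.range g := Equiv.ofInjective g hg
  have hcard : Fintype.card {x // ¬ x ∈ Set.range f} = Fintype.card {x // ¬ x ∈ Set.range g} := by
    rw [Fintype.card_subtype_compl, Fintype.card_subtype_compl]
    congr 1
    rw [← Fintype.card_congr ef, ← Fintype.card_congr eg]
  let ec : {x // ¬ x ∈ Set.range f} ≃ {x // ¬ x ∈ Set.range g} := Fintype.equivOfCardEq hcard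
  refine ⟨((Equiv.sumCompl (· ∈ Set.range f)).symm.trans
    (((ef.symm.trans eg).sumCongr ec).trans (Equiv.sumCompl (· ∈ Set.range g)))), fun k => ?_⟩
  have h1 : (Equiv.sumCompl (· ∈ Set.range f)).symm (f k) = Sum.inl ⟨f k, ⟨k, rfl⟩⟩ := by
    rw [Equiv.symm_apply_eq, Equiv.sumCompl_apply_inl]
  simp only [Equiv.trans_apply, h1, Equiv.sumCongr_apply, Sum.map_inl,
    Equiv.sumCompl_apply_inl]
  have h2 : ef.symm ⟨f k, ⟨k, rfl⟩⟩ = k := Equiv.ofInjective_symm_apply hf k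
  rw [h2]
  rfl

/-- The generators `λ_{i,j}` commute in `VT n` when their index sets are disjoint. -/
lemma VL_comm {a b c d : Fin n} (hab : a < b) (hcd : c < d)
    (h1 : a ≠ c) (h2 : a ≠ d) (h3 : b ≠ c) (h4 : b ≠ d) :
    Commute (VL a b) (VL c d) := by
  have hn1 : 1 ≤ n := by have := a.2; omega
  have hfinj : Function.Injective (![a, b, c, d]) := by
    intro x y hxy
    fin_cases x <;> fin_cases y <;> simp_all <;>
      first
        | rfl
        | (exfalso; revert hxy;
           simp [hab.ne, hcd.ne, hab.ne', hcd.ne', h1, h2, h3, h4, h1.symm, h2.symm,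
             h3.symm, h4.symm])
  have h4n : 4 ≤ n := by
    have := Fintype.card_le_of_injective _ hfinj
    simpa using this
  let t : Fin 4 → Fin n := fun k => ⟨k.1, by omega⟩
  have ht : Function.Injective t := by
    intro x y hxy
    apply Fin.ext
    simpa [t, Fin.ext_iff] using hxy
  obtain ⟨σ, hσ⟩ := exists_perm_map_four ![a, b, c, d] t hfinj ht
  have s0 : σ a = t 0 := by simpa using hσ 0
  have s1 : σ b = t 1 := by simpa using hσ 1
  have s2 : σ c = t 2 := by simpa using hσ 2
  have s3 : σ d = t 3 := by simpa using hσ 3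
  have key1 : secHom hn1 σ * VL a b * (secHom hn1 σ)⁻¹ = VL (t 0) (t 1) := by
    rw [secHom_conj hn1 σ a b, s0, s1]
  have key2 : secHom hn1 σ * VL c d * (secHom hn1 σ)⁻¹ = VL (t 2) (t 3) := by
    rw [secHom_conj hn1 σ c d, s2, s3]
  have hc : Commute (VL (t 0) (t 1)) (VL (t 2) (t 3)) := by
    rw [VL_of_lt (show ((t 0).1 : ℕ) < (t 1).1 by simp only [t]; decide),
      VL_of_lt (show ((t 2).1 : ℕ) < (t 3).1 by simp only [t]; decide)]
    show Commute (lamN 0 1) (lamN 2 3)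
    rw [show (1 : ℕ) = 0 + 1 from rfl, show (3 : ℕ) = 2 + 1 from rfl,
      lamN_base (by omega), lamN_base (by omega)]
    have c1 : Commute (sg (n := n) 0 (by omega)) (sg 2 (by omega)) :=
      ss_comm _ _ (by omega)
    have c2 : Commute (sg (n := n) 0 (by omega)) (rg 2 (by omega)) :=
      sr_comm _ _ (by omega)
    have c3 : Commute (rg (n := n) 0 (by omega)) (sg 2 (by omega)) :=
      rs_comm _ _ (by omega)
    have c4 : Commute (rg (n := n) 0 (by omega)) (rg 2 (by omega)) :=
      rr_comm _ _ (by omega)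
    exact (c1.mul_right c2).mul_left (c3.mul_right c4)
  apply commute_of_conj (g := secHom hn1 σ)
  rw [key1, key2]
  exact hc

/-- The homomorphism `ψ : G n →* VT n`, `λ_{i,j} ↦ λ_{i,j}`. -/
def psi (n : ℕ) : Gn n →* VT n :=
  PresentedGroup.toGroup (f := lam) (by
    rintro w ⟨p, q, hpq, rfl⟩
    rw [map_commutatorElement]
    simp only [FreeGroup.lift_apply_of]
    apply commutatorElement_eq_one_iff_commute.mpr
    rw [lam_eq_VL p, lam_eq_VL q]
    exact VL_comm p.2 q.2 hpq.1 hpq.2.1 hpq.2.2.1 hpq.2.2.2)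

lemma psi_of (p : Vtx n) : psi n (PresentedGroup.of p) = lam p :=
  PresentedGroup.toGroup.of _

lemma psi_vG (a b : Fin n) : psi n (vG a b) = VL a b := by
  rcases lt_trichotomy a b with h | h | h
  · rw [vG_lt h, psi_of]
    exact lam_eq_VL _
  · subst h
    rw [vG_refl, map_one, VL_refl]
  · rw [vG_gt h, map_inv, psi_of, show lam ⟨(b, a), h⟩ = VL b a from lam_eq_VL _, VL_inv]

lemma phi_psi (g : Gn n) : phi n (psi n g) = SemidirectProduct.inl g := by
  have h : (phi n).comp (psi n) = SemidirectProduct.inl := by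
    apply PresentedGroup.ext
    intro p
    rw [MonoidHom.comp_apply, psi_of, lam_eq_VL, phi_VL, vG_lt p.2]
    rfl
  rw [← h]
  rfl

lemma psi_inj : Function.Injective (psi n) := by
  intro x y h
  have := congrArg (phi n) h
  rw [phi_psi, phi_psi] at this
  exact SemidirectProduct.inl_injective this

lemma perm_psi (g : Gn n) : perm n (psi n g) = 1 := by
  rw [← phi_right, phi_psi]
  rfl

lemma psi_equivariant (hn1 : 1 ≤ n) (σ : Equiv.Perm (Fin n)) (x : Gn n) :
    psi n (actHom σ x) = secHom hn1 σ * psi n x * (secHom hn1 σ)⁻¹ := by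
  have h : (psi n).comp (actHom σ)
      = ((MulAut.conj (secHom hn1 σ)).toMonoidHom).comp (psi n) := by
    apply PresentedGroup.ext
    intro p
    rw [MonoidHom.comp_apply, MonoidHom.comp_apply, actHom_of, psi_vG, psi_of, lam_eq_VL]
    simp only [MulEquiv.coe_toMonoidHom, MulAut.conj_apply]
    exact (secHom_conj hn1 σ p.1.1 p.1.2).symm
  have := DFunLike.congr_fun h x
  simpa [MulAut.conj_apply] using this

end Psi

/-! ### Part E: `Θ = id` and the main theorem -/

section Theta
variable {n : ℕ}

/-- The retraction-style endomorphism `x ↦ ψ((φ x).left) · sec(π x)` of `VT n`. -/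
noncomputable def theta (hn1 : 1 ≤ n) : VT n →* VT n where
  toFun x := psi n ((phi n x).left) * secHom hn1 (perm n x)
  map_one' := by
    show psi n ((phi n 1).left) * secHom hn1 (perm n 1) = 1
    rw [map_one, map_one, SemidirectProduct.one_left, map_one, map_one, one_mul]
  map_mul' x y := by
    simp only [map_mul, SemidirectProduct.mul_left]
    rw [actAut_apply, phi_right, psi_equivariant hn1]
    group

lemma theta_eq_id (hn1 : 1 ≤ n) : theta hn1 = MonoidHom.id (VT n) := by
  apply PresentedGroup.ext
  rintro (i | i)
  · show psi n ((phi n (sg i.1 i.2)).left) * secHom hn1 (perm n (sg i.1 i.2)) = sg i.1 i.2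
    rw [phi_sg, perm_sg]
    show psi n (vGp ⟨i.1, i.2⟩) * secHom hn1 (tr ⟨i.1, i.2⟩) = sg i.1 i.2
    rw [vGp, psi_vG, secHom_tr, VL_of_lt (finA_lt_finB _)]
    show lamN i.1 (i.1+1) * rg i.1 i.2 = sg i.1 i.2
    rw [lamN_base (by have := i.2; omega), mul_assoc]
    rw [show rg (n := n) i.1 (by have := i.2; omega) * rg i.1 i.2 = 1 from rg_sq i.2, mul_one]
  · show psi n ((phi n (rg i.1 i.2)).left) * secHom hn1 (perm n (rg i.1 i.2)) = rg i.1 i.2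
    rw [phi_rg, perm_rg]
    show psi n 1 * secHom hn1 (tr ⟨i.1, i.2⟩) = rg i.1 i.2
    rw [map_one, one_mul, secHom_tr]

lemma theta_apply (hn1 : 1 ≤ n) (x : VT n) :
    x = psi n ((phi n x).left) * secHom hn1 (perm n x) := by
  conv_lhs => rw [show x = MonoidHom.id (VT n) x from rfl, ← theta_eq_id hn1]
  rfl

end Theta

/-- `PVT_n` has the right-angled Artin presentation with generators `λ_{i,j}`,
`1 ≤ i < j ≤ n`, and relations `λ_{i,j}λ_{k,l} = λ_{k,l}λ_{i,j}` for distinct `i,j,k,l`: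
the presented group is isomorphic to `PVT_n = ker(π : VT_n → S_n)` via an isomorphism
sending each generator to `λ_{i,j}`. -/
theorem pvt_presentation (n : ℕ) (hn : 2 ≤ n) :
    ∃ e : PresentedGroup (raagRels n) ≃* (perm n).ker,
      ∀ p : Vtx n, ((e (PresentedGroup.of p) : (perm n).ker) : VT n) = lam p := by
  have hn1 : 1 ≤ n := by omega
  have hker : ∀ g : Gn n, psi n g ∈ (perm n).ker :=
    fun g => MonoidHom.mem_ker.mpr (perm_psi g)
  let ι : Gn n →* (perm n).ker := (psi n).codRestrict (perm n).ker hker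
  have hbij : Function.Bijective ι := by
    constructor
    · intro x y h
      exact psi_inj (congrArg Subtype.val h)
    · rintro ⟨x, hx⟩
      have hx1 : perm n x = 1 := MonoidHom.mem_ker.mp hx
      refine ⟨(phi n x).left, Subtype.ext ?_⟩
      show psi n ((phi n x).left) = x
      conv_rhs => rw [theta_apply hn1 x]
      rw [hx1, map_one, mul_one]
  refine ⟨MulEquiv.ofBijective ι hbij, fun p => ?_⟩
  show ((ι (PresentedGroup.of p) : (perm n).ker) : VT n) = lam p
  show psi n (PresentedGroup.of p) = lam p
  exact psi_of p

end VTG
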